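/- Let K, m be positive integers, X a real K×m matrix, and y ∈ ℝ^K. Suppose β : ℝ^K → ℝ^m is differentiable at y and satisfies the Poisson maximum-likelihood normal equations Xᵀ·(u − exp(X·β(u))) = 0 for all u in a neighborhood of y, where exp is applied componentwise. If G = Xᵀ·diag(exp(X·β(y)))·X is invertible, then the fitted log-density map u ↦ X·β(u) has Fréchet derivative at y equal to the linear map h ↦ X·G⁻¹·Xᵀ·h; that is, dℓ̂/dy = X·Ĝ⁻¹·Xᵀ. -/

import Mathlib

open Matrix

/-- In Lindsey's method, if the Poisson maximum-likelihood map `β`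
satisfies the normal equations `Xᵀ·(u − exp(X·β(u))) = 0` near `y` and is
differentiable at `y`, then the fitted log-density map `u ↦ X·β(u)` has Fréchet
derivative `h ↦ X·G⁻¹·Xᵀ·h`, where `G = Xᵀ·diag(exp(X·β(y)))·X`. -/
theorem lindsey_fitted_log_density_derivative
    (K m : ℕ) (hK : 0 < K) (hm : 0 < m)
    (X : Matrix (Fin K) (Fin m) ℝ)
    (y : Fin K → ℝ)
    (β : (Fin K → ℝ) → (Fin m → ℝ))
    (hβdiff : DifferentiableAt ℝ β y)
    (hnormal : ∀ᶠ u in nhds y,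
      Xᵀ.mulVec (u - fun k => Real.exp (X.mulVec (β u) k)) = 0)
    (G : Matrix (Fin m) (Fin m) ℝ)
    (hG : G = Xᵀ * Matrix.diagonal (fun k => Real.exp (X.mulVec (β y) k)) * X)
    (hGinv : IsUnit G.det) :
    HasFDerivAt (fun u => X.mulVec (β u))
      (LinearMap.toContinuousLinearMap ((X * G⁻¹ * Xᵀ).mulVecLin)) y := by
  obtain ⟨B, hB⟩ : ∃ B, HasFDerivAt β B y := ⟨_, hβdiff.hasFDerivAt⟩
  set ν : Fin K → ℝ := fun k => Real.exp (X.mulVec (β y) k) with hν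
  set Xclm : (Fin m → ℝ) →L[ℝ] (Fin K → ℝ) :=
    LinearMap.toContinuousLinearMap X.mulVecLin with hXclm
  set XB : (Fin K → ℝ) →L[ℝ] (Fin K → ℝ) := Xclm.comp B with hXB
  have hXβ : HasFDerivAt (fun u => X.mulVec (β u)) XB y :=
    (Xclm.hasFDerivAt).comp y hB
  set E : (Fin K → ℝ) →L[ℝ] (Fin K → ℝ) :=
    ContinuousLinearMap.pi
      (fun k => ν k • ((ContinuousLinearMap.proj k).comp XB)) with hE
  have hEapp : ∀ h, E h = (Matrix.diagonal ν).mulVec (X.mulVec (B h)) := by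
    intro h
    ext k
    simp [hE, mulVec_diagonal, hXB, hXclm]
  have hexp : HasFDerivAt (fun u (k : Fin K) => Real.exp (X.mulVec (β u) k)) E y := by
    rw [hasFDerivAt_pi']
    intro k
    have h1 : HasFDerivAt (fun u => X.mulVec (β u) k)
        ((ContinuousLinearMap.proj k).comp XB) y := hasFDerivAt_pi'.1 hXβ k
    have h2 := h1.exp
    exact h2
  have hg : HasFDerivAt
      (fun u => Xᵀ.mulVec (u - fun k => Real.exp (X.mulVec (β u) k)))
      ((LinearMap.toContinuousLinearMap Xᵀ.mulVecLin).comp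
        (ContinuousLinearMap.id ℝ (Fin K → ℝ) - E)) y :=
    ((LinearMap.toContinuousLinearMap Xᵀ.mulVecLin).hasFDerivAt).comp y
      ((hasFDerivAt_id y).sub hexp)
  have hzero : HasFDerivAt
      (fun u => Xᵀ.mulVec (u - fun k => Real.exp (X.mulVec (β u) k)))
      (0 : (Fin K → ℝ) →L[ℝ] (Fin m → ℝ)) y :=
    (hasFDerivAt_const (0 : Fin m → ℝ) y).congr_of_eventuallyEq hnormal
  have hD := hg.unique hzero
  have key : ∀ h, Xᵀ.mulVec h = G.mulVec (B h) := by
    intro h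
    have := congrArg (fun (T : (Fin K → ℝ) →L[ℝ] (Fin m → ℝ)) => T h) hD
    simp only [ContinuousLinearMap.comp_apply, ContinuousLinearMap.coe_sub',
      Pi.sub_apply, ContinuousLinearMap.id_apply, ContinuousLinearMap.zero_apply] at this
    have h2 : Xᵀ.mulVec (h - E h) = 0 := this
    rw [Matrix.mulVec_sub, sub_eq_zero] at h2
    rw [h2, hEapp, Matrix.mulVec_mulVec, Matrix.mulVec_mulVec, hG]
  have hBh : ∀ h, B h = G⁻¹.mulVec (Xᵀ.mulVec h) := by
    intro h
    rw [key, Matrix.mulVec_mulVec, Matrix.nonsing_inv_mul G hGinv, Matrix.one_mulVec]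
  have hfin : XB = LinearMap.toContinuousLinearMap ((X * G⁻¹ * Xᵀ).mulVecLin) := by
    ext h
    simp only [hXB, ContinuousLinearMap.comp_apply, hXclm,
      LinearMap.coe_toContinuousLinearMap', Matrix.mulVecLin_apply]
    rw [hBh h, Matrix.mulVec_mulVec, Matrix.mulVec_mulVec]
  rw [← hfin]
  exact hXβ
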